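/- arXiv:2512.15351 — 3 statements merged into one kernel-verified Lean document; each statement's English description precedes it below -/
import Mathlib

section
/- Applying the operator e^{tD²} (where D = d/dt) to the monomial tⁿ yields the polynomial ∑_{k=1}^{n} (n!/k!) · C(n−1, k−1) · t^k, i.e. e^{tD²}[tⁿ] = ∑_{k=1}^{n} L(n,k) t^k where L(n,k) is the Lah number. -/
open Polynomial

/-- The operator `tD²` : `p ↦ t·p''`. -/
noncomputable def tD2 (p : Polynomial ℝ) : Polynomial ℝ :=
  X * (derivative (derivative p))

/-- The operator `e^{tD²} = ∑_j (tD²)^j / j!`, a finite sum on each polynomial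
since `tD²` lowers degree. -/
noncomputable def expTD2 (p : Polynomial ℝ) : Polynomial ℝ :=
  ∑ j ∈ Finset.range (p.natDegree + 1), ((j.factorial : ℝ))⁻¹ • tD2^[j] p

lemma tD2_smul (c : ℝ) (p : Polynomial ℝ) : tD2 (c • p) = c • tD2 p := by
  simp [tD2, derivative_smul, Polynomial.smul_eq_C_mul]; ring

lemma tD2_X_pow (m : ℕ) : tD2 ((X : Polynomial ℝ) ^ m) = ((m * (m - 1) : ℕ) : ℝ) • X ^ (m - 1) := by
  match m with
  | 0 => simp [tD2]
  | 1 => simp [tD2]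
  | (m + 2) =>
    simp only [tD2, derivative_X_pow, derivative_mul, derivative_C, Nat.add_sub_cancel,
      zero_mul, zero_add, Polynomial.smul_eq_C_mul, ← C_mul, ← C_eq_natCast]
    rw [show m + 2 - 1 = m + 1 from rfl, show m + 1 - 1 = m from rfl, pow_succ,
      Nat.cast_mul, C_mul]
    ring

lemma tD2_iter (n j : ℕ) (hj : j ≤ n - 1) (hn : 1 ≤ n) :
    tD2^[j] ((X : Polynomial ℝ) ^ n) =
      ((n.descFactorial j * (n - 1).descFactorial j : ℕ) : ℝ) • X ^ (n - j) := by
  induction j with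
  | zero => simp
  | succ j ih =>
    rw [Function.iterate_succ_apply', ih (by omega), tD2_smul, tD2_X_pow, smul_smul]
    congr 1
    push_cast [Nat.descFactorial_succ]
    rw [show n - j - 1 = n - 1 - j from by omega]
    ring

theorem expTD2_monomial (n : ℕ) (hn : 1 ≤ n) :
    expTD2 ((X : Polynomial ℝ) ^ n) =
      ∑ k ∈ Finset.Icc 1 n,
        (((n.factorial : ℝ) / (k.factorial : ℝ)) * ((n - 1).choose (k - 1) : ℝ)) • X ^ k := by
  have hdeg : ((X : Polynomial ℝ) ^ n).natDegree = n := natDegree_X_pow n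
  have hlast : tD2^[n] ((X : Polynomial ℝ) ^ n) = 0 := by
    obtain ⟨m, rfl⟩ : ∃ m, n = m + 1 := ⟨n - 1, by omega⟩
    rw [Function.iterate_succ_apply', tD2_iter (m + 1) m (by omega) hn,
      show m + 1 - m = 1 from by omega, tD2_smul, tD2_X_pow]
    simp
  rw [expTD2, hdeg, Finset.sum_range_succ, hlast, smul_zero, add_zero]
  refine Finset.sum_nbij' (fun j => n - j) (fun k => n - k) ?_ ?_ ?_ ?_ ?_
  · intro j hj; simp only [Finset.mem_range] at hj; simp only [Finset.mem_Icc]; omega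
  · intro k hk; simp only [Finset.mem_Icc] at hk; simp only [Finset.mem_range]; omega
  · intro j hj; simp only [Finset.mem_range] at hj; omega
  · intro k hk; simp only [Finset.mem_Icc] at hk; omega
  · intro j hj
    simp only [Finset.mem_range] at hj
    rw [tD2_iter n j (by omega) hn, smul_smul]
    congr 1
    have hf1 : ((n - j).factorial : ℝ) ≠ 0 := Nat.cast_ne_zero.mpr (Nat.factorial_ne_zero _)
    have hf2 : ((n - 1 - j).factorial : ℝ) ≠ 0 := Nat.cast_ne_zero.mpr (Nat.factorial_ne_zero _)
    have hf3 : ((j.factorial : ℝ)) ≠ 0 := Nat.cast_ne_zero.mpr (Nat.factorial_ne_zero _)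
    have e1 : (n.descFactorial j : ℝ) = (n.factorial : ℝ) / ((n - j).factorial : ℝ) := by
      rw [eq_div_iff hf1, mul_comm]
      exact_mod_cast congrArg (Nat.cast : ℕ → ℝ) (Nat.factorial_mul_descFactorial (by omega : j ≤ n))
    have e2 : ((n - 1).descFactorial j : ℝ) = ((n - 1).factorial : ℝ) / ((n - 1 - j).factorial : ℝ) := by
      rw [eq_div_iff hf2, mul_comm]
      exact_mod_cast congrArg (Nat.cast : ℕ → ℝ) (Nat.factorial_mul_descFactorial (by omega : j ≤ n - 1))
    have hc : ((n - 1).choose (n - j - 1) : ℝ) =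
        ((n - 1).factorial : ℝ) / (((n - j - 1).factorial : ℝ) * (((n - 1) - (n - j - 1)).factorial : ℝ)) :=
      Nat.cast_choose ℝ (by omega)
    rw [hc, show (n - 1) - (n - j - 1) = j from by omega, show n - j - 1 = n - 1 - j from by omega]
    push_cast [e1, e2]
    field_simp
end

section
/- For simple graphs G and H on disjoint vertex sets, and for each k ≥ 1, every k-path cover of the join G ∇ H arises uniquely from a pair (𝒜, ℬ) of path covers of G and H together with a k-path cover of the complete bipartite graph K_{|𝒜|,|ℬ|} (whose two sides are the paths of 𝒜 and ℬ). Consequently the path-cover polynomial satisfies π_{G∇H}(t) = ∑_{l₁,l₂} p_{l₁}(G) p_{l₂}(H) π_{K_{l₁,l₂}}(t). -/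
variable {V W : Type*}

/-- `S` is a path cover of `G`: a set of vertex-disjoint directed paths
(nonempty duplicate-free lists whose consecutive entries are adjacent in `G`,
one-vertex paths allowed) such that every vertex lies on exactly one path. -/
def IsPathCover (G : SimpleGraph V) (S : Finset (List V)) : Prop :=
  (∀ l ∈ S, l ≠ [] ∧ l.Nodup ∧ l.Chain' G.Adj) ∧ ∀ x : V, ∃! l, l ∈ S ∧ x ∈ l

/-- `p_k(G)`: the number of `k`-path covers of `G`. -/
noncomputable def pathCoverCount (G : SimpleGraph V) (k : ℕ) : ℕ :=
  Nat.card {S : Finset (List V) // S.card = k ∧ IsPathCover G S}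

/-- The number of directed Hamiltonian cycles of `G` (counted up to rotation,
with orientation distinguished): cyclic permutations `σ` of the whole vertex
set such that every vertex is adjacent to its successor. -/
noncomputable def hamCycleCount (G : SimpleGraph V) : ℕ :=
  Nat.card {σ : Equiv.Perm V // σ.IsCycle ∧ (∀ x : V, σ x ≠ x) ∧
    (∀ x : V, G.Adj x (σ x))}

/-- The number of directed Hamiltonian paths of `G`. -/
noncomputable def hamPathCount (G : SimpleGraph V) : ℕ :=
  Nat.card {l : List V // l.Nodup ∧ (∀ x : V, x ∈ l) ∧ l.Chain' G.Adj}

/-- The join `G ∇ H` of two graphs on disjoint vertex sets. -/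
def graphJoin (G : SimpleGraph V) (H : SimpleGraph W) : SimpleGraph (V ⊕ W) where
  Adj x y := match x, y with
    | Sum.inl a, Sum.inl b => G.Adj a b
    | Sum.inr a, Sum.inr b => H.Adj a b
    | Sum.inl _, Sum.inr _ => True
    | Sum.inr _, Sum.inl _ => True
  symm := ⟨by rintro (a | a) (b | b) h <;> simp_all <;> exact h.symm⟩
  loopless := ⟨by rintro (a | a) h <;> simp_all⟩

namespace PJoin
variable {α : Type*} (p : α → Bool)

theorem chain'_iff {β : Type*} {R : β → β → Prop} {l : List β} :
    List.Chain' R l ↔ List.IsChain R l := Iff.rfl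

def blocks : List α → List (List α)
  | [] => []
  | a :: l =>
    match blocks l with
    | [] => [[a]]
    | [] :: r => [a] :: r
    | (b :: bs) :: r => if p a = p b then (a :: b :: bs) :: r else [a] :: (b :: bs) :: r

@[simp] theorem blocks_nil : blocks p [] = [] := rfl

theorem blocks_cons (a : α) (l : List α) : blocks p (a :: l) =
    match blocks p l with
    | [] => [[a]]
    | [] :: r => [a] :: r
    | (b :: bs) :: r => if p a = p b then (a :: b :: bs) :: r else [a] :: (b :: bs) :: r := by
  rfl

theorem blocks_cons_of_eq_nil {l : List α} (a : α) (h : blocks p l = []) :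
    blocks p (a :: l) = [[a]] := by rw [blocks_cons, h]

theorem blocks_cons_of_eq_cons {l : List α} (a b : α) {bs : List α} {r : List (List α)}
    (h : blocks p l = (b :: bs) :: r) :
    blocks p (a :: l) = if p a = p b then (a :: b :: bs) :: r else [a] :: (b :: bs) :: r := by
  rw [blocks_cons, h]

theorem nil_not_mem_blocks : ∀ l : List α, [] ∉ blocks p l
  | [] => by simp
  | a :: l => by
    have ih := nil_not_mem_blocks l
    rcases h : blocks p l with _ | ⟨_ | ⟨c, cs⟩, r⟩
    · rw [blocks_cons_of_eq_nil p a h]; simp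
    · exact absurd (by rw [h]; exact List.mem_cons_self) ih
    · rw [blocks_cons_of_eq_cons p a c h]
      have hr : [] ∉ r := fun hx => ih (by rw [h]; exact List.mem_cons_of_mem _ hx)
      split <;> simp_all

theorem flatten_blocks : ∀ l : List α, (blocks p l).flatten = l
  | [] => rfl
  | a :: l => by
    have ih := flatten_blocks l
    rcases h : blocks p l with _ | ⟨_ | ⟨c, cs⟩, r⟩
    · rw [blocks_cons_of_eq_nil p a h]; rw [h] at ih; simp_all
    · exact absurd (by rw [h]; exact List.mem_cons_self) (nil_not_mem_blocks p l)
    · rw [blocks_cons_of_eq_cons p a c h]; rw [h] at ih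
      split <;> simp_all

theorem blocks_shape (a : α) (l : List α) : ∃ t r, blocks p (a :: l) = (a :: t) :: r := by
  rcases h : blocks p l with _ | ⟨_ | ⟨c, cs⟩, r⟩
  · exact ⟨[], [], blocks_cons_of_eq_nil p a h⟩
  · exact absurd (by rw [h]; exact List.mem_cons_self) (nil_not_mem_blocks p l)
  · rw [blocks_cons_of_eq_cons p a c h]
    split
    · exact ⟨c :: cs, r, rfl⟩
    · exact ⟨[], _, rfl⟩

theorem const_of_mem_blocks : ∀ {l : List α} {b : List α}, b ∈ blocks p l →
    ∀ x ∈ b, ∀ y ∈ b, p x = p y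
  | a :: l, b, hb => by
    rcases h : blocks p l with _ | ⟨_ | ⟨c, cs⟩, r⟩
    · rw [blocks_cons_of_eq_nil p a h] at hb; simp at hb; simp [hb]
    · exact absurd (by rw [h]; exact List.mem_cons_self) (nil_not_mem_blocks p l)
    · rw [blocks_cons_of_eq_cons p a c h] at hb
      have ihcc : ∀ x ∈ c :: cs, ∀ y ∈ c :: cs, p x = p y :=
        const_of_mem_blocks (l := l) (by rw [h]; exact List.mem_cons_self)
      split at hb
      · rcases List.mem_cons.1 hb with rfl | hb
        · rename_i hpc
          have key : ∀ x ∈ a :: c :: cs, p x = p c := by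
            intro x hx
            rcases List.mem_cons.1 hx with rfl | hx
            · exact hpc
            · exact ihcc x hx c (by simp)
          intro x hx y hy
          rw [key x hx, key y hy]
        · exact const_of_mem_blocks (l := l)
            (by rw [h]; exact List.mem_cons_of_mem _ hb)
      · rcases List.mem_cons.1 hb with rfl | hb
        · simp
        · rcases List.mem_cons.1 hb with rfl | hb
          · exact ihcc
          · exact const_of_mem_blocks (l := l)
              (by rw [h]; exact List.mem_cons_of_mem _ hb)

theorem chain'_blocks : ∀ l : List α,
    (blocks p l).Chain' (fun b c => ∀ x ∈ b, ∀ y ∈ c, p x ≠ p y)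
  | [] => List.isChain_nil
  | a :: l => by
    have ih := chain'_blocks l
    rcases h : blocks p l with _ | ⟨_ | ⟨c, cs⟩, r⟩
    · rw [blocks_cons_of_eq_nil p a h]; exact List.isChain_singleton _
    · exact absurd (by rw [h]; exact List.mem_cons_self) (nil_not_mem_blocks p l)
    · rw [blocks_cons_of_eq_cons p a c h]; rw [h] at ih
      have hconst : ∀ x ∈ c :: cs, ∀ y ∈ c :: cs, p x = p y :=
        const_of_mem_blocks p (l := l) (by rw [h]; exact List.mem_cons_self)
      split
      · rename_i hpc
        refine List.isChain_cons.2 ⟨?_, (List.isChain_cons.1 ih).2⟩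
        intro d hd x hx y hy
        have hrel := (List.isChain_cons.1 ih).1 d hd
        rcases List.mem_cons.1 hx with rfl | hx
        · intro hxy; exact hrel c (by simp) y hy (by rw [← hpc]; exact hxy)
        · exact hrel x hx y hy
      · rename_i hpc
        refine List.isChain_cons_cons.2 ⟨?_, ih⟩
        intro x hx y hy
        rcases List.mem_cons.1 hx with rfl | hx
        · intro hxy
          exact hpc (hxy.trans (hconst y hy c (by simp)))
        · simp at hx

theorem blocks_block_append (b : List α) : ∀ (l : List α), b ≠ [] →
    (∀ x ∈ b, ∀ y ∈ b, p x = p y) →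
    (∀ x ∈ b, ∀ y ∈ l.head?.toList, p x ≠ p y) →
    blocks p (b ++ l) = b :: blocks p l := by
  induction b with
  | nil => simp
  | cons x b ihb =>
    intro l _ hconst hhead
    rcases b with _ | ⟨y, b'⟩
    · rcases l with _ | ⟨c, l'⟩
      · rfl
      · obtain ⟨t, r, ht⟩ := blocks_shape p c l'
        rw [List.singleton_append, blocks_cons, ht]
        have hne : p x ≠ p c := hhead x (by simp) c (by simp)
        simp [hne]
    · have ih := ihb l (by simp)
        (fun u hu v hv => hconst u (by simp [hu]) v (by simp [hv]))
        (fun u hu v hv => hhead u (by simp [hu]) v hv)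
      simp only [List.cons_append] at ih ⊢
      rw [blocks_cons, ih]
      have hxy : p x = p y := hconst x (by simp) y (by simp)
      simp [hxy]

theorem blocks_flatten (bs : List (List α)) (h1 : ∀ b ∈ bs, b ≠ [])
    (h2 : ∀ b ∈ bs, ∀ x ∈ b, ∀ y ∈ b, p x = p y)
    (h3 : bs.Chain' (fun b c => ∀ x ∈ b, ∀ y ∈ c, p x ≠ p y)) :
    blocks p bs.flatten = bs := by
  induction bs with
  | nil => rfl
  | cons b bs ih =>
    rw [List.flatten_cons, blocks_block_append p b _ (h1 b (by simp))
      (h2 b (by simp)) ?_, ih (fun c hc => h1 c (by simp [hc]))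
      (fun c hc => h2 c (by simp [hc])) h3.tail]
    intro x hx y hy
    rcases bs with _ | ⟨c, bs'⟩
    · simp at hy
    · rw [List.flatten_cons, List.head?_append_of_ne_nil _ (h1 c (by simp))] at hy
      simp only [Option.mem_toList, Option.mem_def] at hy
      exact (List.isChain_cons.1 h3).1 c rfl x hx y (List.mem_of_mem_head? hy)


/-- Path covers consist of nodup nonempty lists; they form a finite type. -/
theorem finite_cover (G : SimpleGraph V) [Finite V] [DecidableEq V] (P : ℕ → Prop) :
    Finite {S : Finset (List V) // P S.card ∧ IsPathCover G S} := by
  classical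
  have hfin : {l : List V | l.Nodup}.Finite := by
    have := Fintype.ofFinite V
    refine (List.finite_length_le (α := V) (Fintype.card V)).subset ?_
    intro l hl
    exact hl.length_le_card
  set t : Finset (List V) := hfin.toFinset with ht
  refine Finite.of_injective (β := {x // x ∈ t.powerset})
    (fun S => ⟨S.1, Finset.mem_powerset.2 fun l hl => hfin.mem_toFinset.2
      (S.2.2.1 l hl).2.1⟩) ?_
  intro S S' h
  simpa [Subtype.ext_iff] using h

/-- A path cover has at most `card V` paths. -/
theorem cover_card_le (G : SimpleGraph V) [Fintype V] [DecidableEq V]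
    {S : Finset (List V)} (hS : IsPathCover G S) : S.card ≤ Fintype.card V := by
  classical
  have : ∀ l ∈ S, ∃ x : V, x ∈ l := by
    intro l hl
    exact List.exists_mem_of_ne_nil l (hS.1 l hl).1
  choose f hf using this
  have hinj : ∀ l (hl : l ∈ S) l' (hl' : l' ∈ S), f l hl = f l' hl' → l = l' := by
    intro l hl l' hl' heq
    obtain ⟨u, -, hu⟩ := hS.2 (f l hl)
    rw [hu l ⟨hl, hf l hl⟩, hu l' ⟨hl', heq ▸ hf l' hl'⟩]
  calc S.card = (S.attach.image fun l => f l.1 l.2).card := by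
        rw [Finset.card_image_of_injective _ ?_, Finset.card_attach]
        intro a b hab
        exact Subtype.ext (hinj a.1 a.2 b.1 b.2 hab)
    _ ≤ Fintype.card V := by
        simpa using Finset.card_le_card (Finset.subset_univ _)

/-- Relabeling a graph along an equivalence preserving adjacency gives an
equivalence of path-cover types. -/
noncomputable def coverEquivOfEquiv {α β : Type*} [DecidableEq α] [DecidableEq β]
    {G : SimpleGraph α} {G' : SimpleGraph β} (e : α ≃ β)
    (hadj : ∀ x y, G.Adj x y ↔ G'.Adj (e x) (e y)) (P : ℕ → Prop) :
    {S : Finset (List α) // P S.card ∧ IsPathCover G S} ≃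
    {S : Finset (List β) // P S.card ∧ IsPathCover G' S} where
  toFun S := ⟨S.1.image (List.map e), by
    obtain ⟨hP, hS⟩ := S.2
    have hinj : Function.Injective (List.map (e : α → β)) :=
      List.map_injective_iff.2 e.injective
    constructor
    · rwa [Finset.card_image_of_injective _ hinj]
    constructor
    · intro l hl
      obtain ⟨m, hm, rfl⟩ := Finset.mem_image.1 hl
      obtain ⟨h1, h2, h3⟩ := hS.1 m hm
      refine ⟨by simpa using h1, h2.map e.injective, ?_⟩
      rw [chain'_iff, List.isChain_map]
      exact h3.imp fun a b hab => (hadj a b).1 hab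
    · intro x
      obtain ⟨l, ⟨hl, hxl⟩, hu⟩ := hS.2 (e.symm x)
      refine ⟨l.map e, ⟨Finset.mem_image_of_mem _ hl, by
        simpa using ⟨e.symm x, hxl, by simp⟩⟩, ?_⟩
      rintro l' ⟨hl', hxl'⟩
      obtain ⟨m, hm, rfl⟩ := Finset.mem_image.1 hl'
      obtain ⟨y, hy, rfl⟩ := List.mem_map.1 hxl'
      rw [hu m ⟨hm, by simpa using hy⟩]⟩
  invFun S := ⟨S.1.image (List.map e.symm), by
    obtain ⟨hP, hS⟩ := S.2
    have hinj : Function.Injective (List.map (e.symm : β → α)) :=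
      List.map_injective_iff.2 e.symm.injective
    constructor
    · rwa [Finset.card_image_of_injective _ hinj]
    constructor
    · intro l hl
      obtain ⟨m, hm, rfl⟩ := Finset.mem_image.1 hl
      obtain ⟨h1, h2, h3⟩ := hS.1 m hm
      refine ⟨by simpa using h1, h2.map e.symm.injective, ?_⟩
      rw [chain'_iff, List.isChain_map]
      refine h3.imp fun a b hab => ?_
      rw [hadj]
      simpa using hab
    · intro x
      obtain ⟨l, ⟨hl, hxl⟩, hu⟩ := hS.2 (e x)
      refine ⟨l.map e.symm, ⟨Finset.mem_image_of_mem _ hl, by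
        simpa using ⟨e x, hxl, by simp⟩⟩, ?_⟩
      rintro l' ⟨hl', hxl'⟩
      obtain ⟨m, hm, rfl⟩ := Finset.mem_image.1 hl'
      obtain ⟨y, hy, rfl⟩ := List.mem_map.1 hxl'
      rw [hu m ⟨hm, by simpa using hy⟩]⟩
  left_inv S := by
    ext1
    simp only [Finset.image_image]
    rw [show (List.map e.symm ∘ List.map e) = id by
      funext l; simp [List.map_map]]
    simp
  right_inv S := by
    ext1
    simp only [Finset.image_image]
    rw [show (List.map e ∘ List.map e.symm) = id by
      funext l; simp [List.map_map]]
    simp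


theorem mem_of_mem_blocks {α : Type*} (p : α → Bool) {l b : List α} (hb : b ∈ blocks p l)
    {x : α} (hx : x ∈ b) : x ∈ l := by
  rw [← flatten_blocks p l]
  exact List.mem_flatten.2 ⟨b, hb, hx⟩

theorem nodup_blocks {α : Type*} (p : α → Bool) {l : List α} (hl : l.Nodup) :
    ((blocks p l).Nodup) ∧ (∀ b ∈ blocks p l, b.Nodup) ∧ (blocks p l).Pairwise List.Disjoint := by
  have h := hl
  rw [← flatten_blocks p l, List.nodup_flatten] at h
  refine ⟨?_, h.1, h.2⟩
  refine List.Pairwise.imp_of_mem (fun {b b'} hb hb' hd => ?_) h.2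
  intro heq
  subst heq
  obtain ⟨x, hx⟩ := List.exists_mem_of_ne_nil b (fun hn => nil_not_mem_blocks _ l (hn ▸ hb))
  exact hd hx hx

theorem blocks_eq_of_mem {α : Type*} (p : α → Bool) {l b b' : List α} (hl : l.Nodup)
    (hb : b ∈ blocks p l) (hb' : b' ∈ blocks p l) {x : α} (hx : x ∈ b) (hx' : x ∈ b') :
    b = b' := by
  have h := hl
  rw [← flatten_blocks p l, List.nodup_flatten] at h
  by_contra hne
  haveI : Std.Symm (@List.Disjoint α) := ⟨fun _ _ h => h.symm⟩
  exact (h.2.forall hb hb' hne) hx hx'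

set_option linter.unusedSectionVars false

section Side
variable {V W : Type*} [DecidableEq V] [DecidableEq W]

def unL (l : List (V ⊕ W)) : List V := l.filterMap Sum.getLeft?
def unR (l : List (V ⊕ W)) : List W := l.filterMap Sum.getRight?

@[simp] theorem unL_map_inl (l : List V) : unL (l.map Sum.inl : List (V ⊕ W)) = l := by
  simp [unL, List.filterMap_map, Function.comp_def]

@[simp] theorem unL_map_inr (l : List W) : unL (l.map Sum.inr : List (V ⊕ W)) = [] := by
  simp [unL, List.filterMap_map, Function.comp_def]

@[simp] theorem unR_map_inr (l : List W) : unR (l.map Sum.inr : List (V ⊕ W)) = l := by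
  simp [unR, List.filterMap_map, Function.comp_def]

@[simp] theorem unR_map_inl (l : List V) : unR (l.map Sum.inl : List (V ⊕ W)) = [] := by
  simp [unR, List.filterMap_map, Function.comp_def]

theorem eq_map_inl_of_all_left : ∀ (b : List (V ⊕ W)), (∀ y ∈ b, y.isLeft = true) →
    b = (unL b).map Sum.inl
  | [], _ => rfl
  | y :: b, h => by
    obtain ⟨v, rfl⟩ : ∃ v, y = Sum.inl v := by
      cases y with
      | inl v => exact ⟨v, rfl⟩
      | inr w => simpa using h (Sum.inr w) (List.mem_cons_self)
    have ih := eq_map_inl_of_all_left b (fun z hz => h z (by simp [hz]))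
    simp only [unL, List.filterMap_cons]
    simpa [unL] using ih

theorem eq_map_inr_of_all_right : ∀ (b : List (V ⊕ W)), (∀ y ∈ b, y.isLeft = false) →
    b = (unR b).map Sum.inr
  | [], _ => rfl
  | y :: b, h => by
    obtain ⟨w, rfl⟩ : ∃ w, y = Sum.inr w := by
      cases y with
      | inl v => simpa using h (Sum.inl v) (List.mem_cons_self)
      | inr w => exact ⟨w, rfl⟩
    have ih := eq_map_inr_of_all_right b (fun z hz => h z (by simp [hz]))
    simp only [unR, List.filterMap_cons]
    simpa [unR] using ih

theorem block_cases {l b : List (V ⊕ W)} (hb : b ∈ blocks Sum.isLeft l) :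
    (b = (unL b).map Sum.inl ∧ unL b ≠ []) ∨ (b = (unR b).map Sum.inr ∧ unR b ≠ []) := by
  have hne : b ≠ [] := fun h => nil_not_mem_blocks _ l (h ▸ hb)
  have hconst := const_of_mem_blocks _ hb
  obtain ⟨x, hx⟩ := List.exists_mem_of_ne_nil b hne
  cases hside : x.isLeft with
  | true =>
    left
    have hall : ∀ y ∈ b, y.isLeft = true := fun y hy => (hconst y hy x hx).trans hside
    have := eq_map_inl_of_all_left b hall
    exact ⟨this, fun h => hne (by rw [this, h]; rfl)⟩
  | false =>
    right
    have hall : ∀ y ∈ b, y.isLeft = false := fun y hy => (hconst y hy x hx).trans hside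
    have := eq_map_inr_of_all_right b hall
    exact ⟨this, fun h => hne (by rw [this, h]; rfl)⟩

end Side

theorem chain'_of_mem_blocks {α : Type*} (p : α → Bool) {R : α → α → Prop} {l b : List α}
    (hch : l.Chain' R) (hb : b ∈ blocks p l) : b.Chain' R := by
  rw [← flatten_blocks p l] at hch
  exact ((List.isChain_flatten (nil_not_mem_blocks p l)).1 hch).1 b hb

section Main
variable {V W : Type*} [DecidableEq V] [DecidableEq W]
variable {G : SimpleGraph V} {H : SimpleGraph W}

def coverA (S : Finset (List (V ⊕ W))) : Finset (List V) :=
  (S.biUnion fun l => ((blocks Sum.isLeft l).map unL).toFinset).erase []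

def coverB (S : Finset (List (V ⊕ W))) : Finset (List W) :=
  (S.biUnion fun l => ((blocks Sum.isLeft l).map unR).toFinset).erase []

theorem mem_coverA {S : Finset (List (V ⊕ W))} {a : List V} :
    a ∈ coverA S ↔ a ≠ [] ∧ ∃ l ∈ S, ∃ b ∈ blocks Sum.isLeft l, unL b = a := by
  simp [coverA]

theorem mem_coverB {S : Finset (List (V ⊕ W))} {a : List W} :
    a ∈ coverB S ↔ a ≠ [] ∧ ∃ l ∈ S, ∃ b ∈ blocks Sum.isLeft l, unR b = a := by
  simp [coverB]

theorem left_block_of_unL_ne_nil {l b : List (V ⊕ W)} (hb : b ∈ blocks Sum.isLeft l)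
    (h : unL b ≠ []) : b = (unL b).map Sum.inl := by
  rcases block_cases hb with ⟨h1, _⟩ | ⟨h1, _⟩
  · exact h1
  · exact absurd (by rw [h1]; simp) h

theorem right_block_of_unR_ne_nil {l b : List (V ⊕ W)} (hb : b ∈ blocks Sum.isLeft l)
    (h : unR b ≠ []) : b = (unR b).map Sum.inr := by
  rcases block_cases hb with ⟨h1, _⟩ | ⟨h1, _⟩
  · exact absurd (by rw [h1]; simp) h
  · exact h1

theorem coverA_isPathCover {S : Finset (List (V ⊕ W))}
    (hS : IsPathCover (graphJoin G H) S) : IsPathCover G (coverA S) := by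
  constructor
  · intro a ha
    obtain ⟨hane, l, hl, b, hb, rfl⟩ := mem_coverA.1 ha
    have hbl : b = (unL b).map Sum.inl := left_block_of_unL_ne_nil hb hane
    obtain ⟨hlne, hnd, hch⟩ := hS.1 l hl
    have hbnd : b.Nodup := (nodup_blocks _ hnd).2.1 b hb
    have hbch : b.Chain' (graphJoin G H).Adj := chain'_of_mem_blocks _ hch hb
    rw [hbl] at hbnd hbch
    refine ⟨hane, hbnd.of_map _, ?_⟩
    rw [chain'_iff, List.isChain_map] at hbch
    exact hbch.imp fun x y h => h
  · intro x
    obtain ⟨l, ⟨hl, hx⟩, hu⟩ := hS.2 (Sum.inl x)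
    have hnd : l.Nodup := (hS.1 l hl).2.1
    have hx' : Sum.inl x ∈ (blocks Sum.isLeft l).flatten := by
      rw [flatten_blocks]; exact hx
    obtain ⟨b, hb, hxb⟩ := List.mem_flatten.1 hx'
    have hbl : b = (unL b).map Sum.inl := by
      rcases block_cases hb with ⟨h1, _⟩ | ⟨h1, _⟩
      · exact h1
      · rw [h1] at hxb; simp at hxb
    have hxa : x ∈ unL b := by
      rw [hbl] at hxb
      simpa using hxb
    refine ⟨unL b, ⟨mem_coverA.2 ⟨List.ne_nil_of_mem hxa, l, hl, b, hb, rfl⟩, hxa⟩, ?_⟩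
    rintro a' ⟨ha', hxa'⟩
    obtain ⟨ha'ne, l', hl', b', hb', rfl⟩ := mem_coverA.1 ha'
    have hb'l : b' = (unL b').map Sum.inl := left_block_of_unL_ne_nil hb' ha'ne
    have hxb' : Sum.inl x ∈ b' := by rw [hb'l]; exact List.mem_map_of_mem hxa'
    have hll : l' = l := hu l' ⟨hl', mem_of_mem_blocks _ hb' hxb'⟩
    subst hll
    rw [blocks_eq_of_mem _ hnd hb' hb hxb' hxb]

theorem coverB_isPathCover {S : Finset (List (V ⊕ W))}
    (hS : IsPathCover (graphJoin G H) S) : IsPathCover H (coverB S) := by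
  constructor
  · intro a ha
    obtain ⟨hane, l, hl, b, hb, rfl⟩ := mem_coverB.1 ha
    have hbl : b = (unR b).map Sum.inr := right_block_of_unR_ne_nil hb hane
    obtain ⟨hlne, hnd, hch⟩ := hS.1 l hl
    have hbnd : b.Nodup := (nodup_blocks _ hnd).2.1 b hb
    have hbch : b.Chain' (graphJoin G H).Adj := chain'_of_mem_blocks _ hch hb
    rw [hbl] at hbnd hbch
    refine ⟨hane, hbnd.of_map _, ?_⟩
    rw [chain'_iff, List.isChain_map] at hbch
    exact hbch.imp fun x y h => h
  · intro x
    obtain ⟨l, ⟨hl, hx⟩, hu⟩ := hS.2 (Sum.inr x)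
    have hnd : l.Nodup := (hS.1 l hl).2.1
    have hx' : Sum.inr x ∈ (blocks Sum.isLeft l).flatten := by
      rw [flatten_blocks]; exact hx
    obtain ⟨b, hb, hxb⟩ := List.mem_flatten.1 hx'
    have hbl : b = (unR b).map Sum.inr := by
      rcases block_cases hb with ⟨h1, _⟩ | ⟨h1, _⟩
      · rw [h1] at hxb; simp at hxb
      · exact h1
    have hxa : x ∈ unR b := by
      rw [hbl] at hxb
      simpa using hxb
    refine ⟨unR b, ⟨mem_coverB.2 ⟨List.ne_nil_of_mem hxa, l, hl, b, hb, rfl⟩, hxa⟩, ?_⟩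
    rintro a' ⟨ha', hxa'⟩
    obtain ⟨ha'ne, l', hl', b', hb', rfl⟩ := mem_coverB.1 ha'
    have hb'l : b' = (unR b').map Sum.inr := right_block_of_unR_ne_nil hb' ha'ne
    have hxb' : Sum.inr x ∈ b' := by rw [hb'l]; exact List.mem_map_of_mem hxa'
    have hll : l' = l := hu l' ⟨hl', mem_of_mem_blocks _ hb' hxb'⟩
    subst hll
    rw [blocks_eq_of_mem _ hnd hb' hb hxb' hxb]

end Main

theorem map_filterMap_eq {α β : Type*} (f : α → Option β) (g : β → α) :
    ∀ (bs : List α), (∀ b ∈ bs, ∃ s, f b = some s ∧ g s = b) →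
    (bs.filterMap f).map g = bs
  | [], _ => rfl
  | b :: bs, h => by
    obtain ⟨s, hs, hgs⟩ := h b (List.mem_cons_self)
    rw [List.filterMap_cons, hs, List.map_cons, hgs,
      map_filterMap_eq f g bs (fun c hc => h c (List.mem_cons_of_mem _ hc))]

theorem filterMap_eq_self' {α : Type*} (f : α → Option α) :
    ∀ (t : List α), (∀ s ∈ t, f s = some s) → t.filterMap f = t
  | [], _ => rfl
  | s :: t, h => by
    rw [List.filterMap_cons, h s (List.mem_cons_self),
      filterMap_eq_self' f t (fun c hc => h c (List.mem_cons_of_mem _ hc))]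

section Main2
variable {V W : Type*} [DecidableEq V] [DecidableEq W]

def enc1 (A : Finset (List V)) (B : Finset (List W)) (b : List (V ⊕ W)) : Option (↑A ⊕ ↑B) :=
  if h : unL b ∈ A then some (Sum.inl ⟨unL b, h⟩)
  else if h' : unR b ∈ B then some (Sum.inr ⟨unR b, h'⟩) else none

def encodeL (A : Finset (List V)) (B : Finset (List W)) (l : List (V ⊕ W)) : List (↑A ⊕ ↑B) :=
  (blocks Sum.isLeft l).filterMap (enc1 A B)

def dec1 (A : Finset (List V)) (B : Finset (List W)) : ↑A ⊕ ↑B → List (V ⊕ W) :=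
  Sum.elim (fun a => a.1.map Sum.inl) (fun b => b.1.map Sum.inr)

def decodeL (A : Finset (List V)) (B : Finset (List W)) (t : List (↑A ⊕ ↑B)) :
    List (V ⊕ W) := (t.map (dec1 A B)).flatten

theorem nil_not_mem_coverA {S : Finset (List (V ⊕ W))} : [] ∉ coverA S := by
  simp [coverA]

theorem nil_not_mem_coverB {S : Finset (List (V ⊕ W))} : [] ∉ coverB S := by
  simp [coverB]

theorem enc1_block {S : Finset (List (V ⊕ W))} {l : List (V ⊕ W)} (hl : l ∈ S)
    {b : List (V ⊕ W)} (hb : b ∈ blocks Sum.isLeft l) :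
    ∃ s, enc1 (coverA S) (coverB S) b = some s ∧ dec1 (coverA S) (coverB S) s = b := by
  rcases block_cases hb with ⟨h1, h2⟩ | ⟨h1, h2⟩
  · have hmem : unL b ∈ coverA S := mem_coverA.2 ⟨h2, l, hl, b, hb, rfl⟩
    exact ⟨Sum.inl ⟨unL b, hmem⟩, by simp [enc1, hmem], by simp [dec1, ← h1]⟩
  · have hnil : unL b ∉ coverA S := by
      rw [h1]; simpa using nil_not_mem_coverA
    have hmem : unR b ∈ coverB S := mem_coverB.2 ⟨h2, l, hl, b, hb, rfl⟩
    exact ⟨Sum.inr ⟨unR b, hmem⟩, by simp [enc1, hnil, hmem], by simp [dec1, ← h1]⟩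

theorem map_dec1_encodeL {S : Finset (List (V ⊕ W))} {l : List (V ⊕ W)} (hl : l ∈ S) :
    (encodeL (coverA S) (coverB S) l).map (dec1 (coverA S) (coverB S)) =
      blocks Sum.isLeft l :=
  map_filterMap_eq _ _ _ (fun b hb => enc1_block hl hb)

theorem decodeL_encodeL {S : Finset (List (V ⊕ W))} {l : List (V ⊕ W)} (hl : l ∈ S) :
    decodeL (coverA S) (coverB S) (encodeL (coverA S) (coverB S) l) = l := by
  rw [decodeL, map_dec1_encodeL hl, flatten_blocks]

theorem enc1_dec1 {A : Finset (List V)} {B : Finset (List W)} (hA : [] ∉ A)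
    (s : ↑A ⊕ ↑B) : enc1 A B (dec1 A B s) = some s := by
  cases s with
  | inl a =>
    have : unL (dec1 A B (Sum.inl a)) = a.1 := by simp [dec1]
    simp [enc1, this, a.2]
  | inr b =>
    have h1 : unL (dec1 A B (Sum.inr b)) = [] := by simp [dec1]
    have h2 : unR (dec1 A B (Sum.inr b)) = b.1 := by simp [dec1]
    simp [enc1, h1, h2, hA, b.2]

theorem blocks_decodeL {A : Finset (List V)} {B : Finset (List W)}
    (hA : ∀ a ∈ A, a ≠ []) (hB : ∀ b ∈ B, b ≠ []) {t : List (↑A ⊕ ↑B)}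
    (ht : t.Chain' (completeBipartiteGraph ↑A ↑B).Adj) :
    blocks Sum.isLeft (decodeL A B t) = t.map (dec1 A B) := by
  rw [decodeL]
  refine blocks_flatten _ _ ?_ ?_ ?_
  · intro b hb
    obtain ⟨s, hs, rfl⟩ := List.mem_map.1 hb
    cases s with
    | inl a => simpa [dec1] using hA a.1 a.2
    | inr b => simpa [dec1] using hB b.1 b.2
  · intro b hb x hx y hy
    obtain ⟨s, hs, rfl⟩ := List.mem_map.1 hb
    cases s with
    | inl a =>
      simp only [dec1, Sum.elim_inl, List.mem_map] at hx hy
      obtain ⟨x', -, rfl⟩ := hx; obtain ⟨y', -, rfl⟩ := hy; rfl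
    | inr b =>
      simp only [dec1, Sum.elim_inr, List.mem_map] at hx hy
      obtain ⟨x', -, rfl⟩ := hx; obtain ⟨y', -, rfl⟩ := hy; rfl
  · rw [chain'_iff, List.isChain_map]
    refine ht.imp ?_
    intro s s' hss x hx y hy
    cases s with
    | inl a =>
      cases s' with
      | inl a' => simp at hss
      | inr b' =>
        simp only [dec1, Sum.elim_inl, Sum.elim_inr, List.mem_map] at hx hy
        obtain ⟨x', -, rfl⟩ := hx; obtain ⟨y', -, rfl⟩ := hy; simp
    | inr b =>
      cases s' with
      | inl a' =>
        simp only [dec1, Sum.elim_inl, Sum.elim_inr, List.mem_map] at hx hy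
        obtain ⟨x', -, rfl⟩ := hx; obtain ⟨y', -, rfl⟩ := hy; simp
      | inr b' => simp at hss

theorem encodeL_decodeL {A : Finset (List V)} {B : Finset (List W)}
    (hA : ∀ a ∈ A, a ≠ []) (hB : ∀ b ∈ B, b ≠ []) {t : List (↑A ⊕ ↑B)}
    (ht : t.Chain' (completeBipartiteGraph ↑A ↑B).Adj) :
    encodeL A B (decodeL A B t) = t := by
  rw [encodeL, blocks_decodeL hA hB ht, List.filterMap_map]
  exact filterMap_eq_self' _ t (fun s hs => enc1_dec1 (fun h => (hA [] h) rfl) s)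

end Main2

section Main3
variable {V W : Type*} [DecidableEq V] [DecidableEq W]
variable {G : SimpleGraph V} {H : SimpleGraph W}

theorem encodeL_injOn {S : Finset (List (V ⊕ W))} :
    Set.InjOn (encodeL (coverA S) (coverB S)) S := fun l hl l' hl' h => by
  rw [← decodeL_encodeL hl, h, decodeL_encodeL hl']

theorem enc1_eq_some_inl {A : Finset (List V)} {B : Finset (List W)} {b : List (V ⊕ W)}
    {a : ↑A} (h : enc1 A B b = some (Sum.inl a)) : unL b = a.1 := by
  unfold enc1 at h
  split at h
  · rename_i hmem
    obtain rfl : (⟨unL b, hmem⟩ : ↑A) = a := by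
      simpa using h
    rfl
  · split at h <;> simp at h

theorem enc1_eq_some_inr {A : Finset (List V)} {B : Finset (List W)} {b : List (V ⊕ W)}
    {c : ↑B} (h : enc1 A B b = some (Sum.inr c)) : unR b = c.1 := by
  unfold enc1 at h
  split at h
  · simp at h
  · split at h
    · rename_i hmem
      obtain rfl : (⟨unR b, hmem⟩ : ↑B) = c := by
        simpa using h
      rfl
    · simp at h

theorem encodeL_image_isPathCover {S : Finset (List (V ⊕ W))}
    (hS : IsPathCover (graphJoin G H) S) :
    IsPathCover (completeBipartiteGraph ↑(coverA S) ↑(coverB S))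
      (S.image (encodeL (coverA S) (coverB S))) := by
  constructor
  · intro t ht
    obtain ⟨l, hl, rfl⟩ := Finset.mem_image.1 ht
    obtain ⟨hlne, hnd, hch⟩ := hS.1 l hl
    have hmap := map_dec1_encodeL (S := S) hl
    refine ⟨?_, ?_, ?_⟩
    · intro h
      apply hlne
      have hbl : blocks Sum.isLeft l = [] := by rw [← hmap, h]; rfl
      rw [← flatten_blocks Sum.isLeft l, hbl]; rfl
    · have hbnd : (blocks Sum.isLeft l).Nodup := (nodup_blocks _ hnd).1
      rw [← hmap] at hbnd
      exact hbnd.of_map _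
    · have hbch := chain'_blocks Sum.isLeft l
      rw [← hmap, chain'_iff, List.isChain_map] at hbch
      refine hbch.imp ?_
      intro s s' h
      cases s with
      | inl a =>
        cases s' with
        | inl a' =>
          exfalso
          obtain ⟨v, hv⟩ := List.exists_mem_of_ne_nil a.1
            (fun hh => nil_not_mem_coverA (hh ▸ a.2))
          obtain ⟨v', hv'⟩ := List.exists_mem_of_ne_nil a'.1
            (fun hh => nil_not_mem_coverA (hh ▸ a'.2))
          exact h (Sum.inl v) (by simp [dec1, hv]) (Sum.inl v') (by simp [dec1, hv']) rfl
        | inr b' => simp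
      | inr b =>
        cases s' with
        | inl a' => simp
        | inr b' =>
          exfalso
          obtain ⟨v, hv⟩ := List.exists_mem_of_ne_nil b.1
            (fun hh => nil_not_mem_coverB (hh ▸ b.2))
          obtain ⟨v', hv'⟩ := List.exists_mem_of_ne_nil b'.1
            (fun hh => nil_not_mem_coverB (hh ▸ b'.2))
          exact h (Sum.inr v) (by simp [dec1, hv]) (Sum.inr v') (by simp [dec1, hv']) rfl
  · intro z
    cases z with
    | inl a =>
      obtain ⟨hane, l, hl, b, hb, hba⟩ := mem_coverA.1 a.2
      have hmemA : unL b ∈ coverA S := hba ▸ a.2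
      refine ⟨encodeL (coverA S) (coverB S) l,
        ⟨Finset.mem_image_of_mem _ hl, List.mem_filterMap.2 ⟨b, hb, ?_⟩⟩, ?_⟩
      · simp only [enc1, hmemA, dif_pos]
        congr 1
        exact congrArg Sum.inl (Subtype.ext hba)
      · rintro t' ⟨ht', hz⟩
        obtain ⟨l', hl', rfl⟩ := Finset.mem_image.1 ht'
        obtain ⟨b', hb', henc⟩ := List.mem_filterMap.1 hz
        have hub' : unL b' = a.1 := enc1_eq_some_inl henc
        have hane' : a.1 ≠ [] := hane
        have hbl' : b' = a.1.map Sum.inl := by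
          rw [← hub']
          exact left_block_of_unL_ne_nil hb' (hub' ▸ hane')
        have hbl : b = a.1.map Sum.inl := by
          rw [← hba]
          exact left_block_of_unL_ne_nil hb (hba ▸ hane')
        obtain ⟨v, hv⟩ := List.exists_mem_of_ne_nil a.1 hane'
        have hvb' : Sum.inl v ∈ b' := by rw [hbl']; exact List.mem_map_of_mem hv
        have hvb : Sum.inl v ∈ b := by rw [hbl]; exact List.mem_map_of_mem hv
        obtain ⟨l₀, ⟨hl₀, hvl₀⟩, hu⟩ := hS.2 (Sum.inl v)
        have h1 : l' = l₀ := hu l' ⟨hl', mem_of_mem_blocks _ hb' hvb'⟩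
        have h2 : l = l₀ := hu l ⟨hl, mem_of_mem_blocks _ hb hvb⟩
        rw [h1, ← h2]
    | inr c =>
      obtain ⟨hane, l, hl, b, hb, hba⟩ := mem_coverB.1 c.2
      have hmemB : unR b ∈ coverB S := hba ▸ c.2
      have hnotA : unL b ∉ coverA S := by
        have : b = (unR b).map Sum.inr := right_block_of_unR_ne_nil hb (hba ▸ hane)
        rw [this]
        simpa using nil_not_mem_coverA
      refine ⟨encodeL (coverA S) (coverB S) l,
        ⟨Finset.mem_image_of_mem _ hl, List.mem_filterMap.2 ⟨b, hb, ?_⟩⟩, ?_⟩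
      · simp only [enc1, hnotA, dif_neg, hmemB, dif_pos, not_false_iff]
        congr 1
        exact congrArg Sum.inr (Subtype.ext hba)
      · rintro t' ⟨ht', hz⟩
        obtain ⟨l', hl', rfl⟩ := Finset.mem_image.1 ht'
        obtain ⟨b', hb', henc⟩ := List.mem_filterMap.1 hz
        have hub' : unR b' = c.1 := enc1_eq_some_inr henc
        have hane' : c.1 ≠ [] := hane
        have hbl' : b' = c.1.map Sum.inr := by
          rw [← hub']
          exact right_block_of_unR_ne_nil hb' (hub' ▸ hane')
        have hbl : b = c.1.map Sum.inr := by
          rw [← hba]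
          exact right_block_of_unR_ne_nil hb (hba ▸ hane')
        obtain ⟨v, hv⟩ := List.exists_mem_of_ne_nil c.1 hane'
        have hvb' : Sum.inr v ∈ b' := by rw [hbl']; exact List.mem_map_of_mem hv
        have hvb : Sum.inr v ∈ b := by rw [hbl]; exact List.mem_map_of_mem hv
        obtain ⟨l₀, ⟨hl₀, hvl₀⟩, hu⟩ := hS.2 (Sum.inr v)
        have h1 : l' = l₀ := hu l' ⟨hl', mem_of_mem_blocks _ hb' hvb'⟩
        have h2 : l = l₀ := hu l ⟨hl, mem_of_mem_blocks _ hb hvb⟩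
        rw [h1, ← h2]

end Main3

section Main4
variable {V W : Type*} [DecidableEq V] [DecidableEq W]
variable {G : SimpleGraph V} {H : SimpleGraph W}
variable {A : Finset (List V)} {B : Finset (List W)} {T : Finset (List (↑A ⊕ ↑B))}

theorem decodeL_injOn (hA : IsPathCover G A) (hB : IsPathCover H B)
    (hT : IsPathCover (completeBipartiteGraph ↑A ↑B) T) :
    Set.InjOn (decodeL A B) T := by
  intro t ht t' ht' h
  have hAne : ∀ a ∈ A, a ≠ [] := fun a ha => (hA.1 a ha).1
  have hBne : ∀ b ∈ B, b ≠ [] := fun b hb => (hB.1 b hb).1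
  rw [← encodeL_decodeL hAne hBne (hT.1 t ht).2.2, h,
    encodeL_decodeL hAne hBne (hT.1 t' ht').2.2]

theorem mem_dec1_cases {s : ↑A ⊕ ↑B} {x : V ⊕ W} (hx : x ∈ dec1 A B s) :
    (∃ a : ↑A, s = Sum.inl a ∧ ∃ v ∈ a.1, x = Sum.inl v) ∨
    (∃ b : ↑B, s = Sum.inr b ∧ ∃ w ∈ b.1, x = Sum.inr w) := by
  cases s with
  | inl a =>
    left
    simp only [dec1, Sum.elim_inl, List.mem_map] at hx
    obtain ⟨v, hv, rfl⟩ := hx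
    exact ⟨a, rfl, v, hv, rfl⟩
  | inr b =>
    right
    simp only [dec1, Sum.elim_inr, List.mem_map] at hx
    obtain ⟨w, hw, rfl⟩ := hx
    exact ⟨b, rfl, w, hw, rfl⟩

theorem decodeL_image_isPathCover (hA : IsPathCover G A) (hB : IsPathCover H B)
    (hT : IsPathCover (completeBipartiteGraph ↑A ↑B) T) :
    IsPathCover (graphJoin G H) (T.image (decodeL A B)) := by
  have hAne : ∀ a ∈ A, a ≠ [] := fun a ha => (hA.1 a ha).1
  have hBne : ∀ b ∈ B, b ≠ [] := fun b hb => (hB.1 b hb).1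
  have hdecne : ∀ s : ↑A ⊕ ↑B, dec1 A B s ≠ [] := by
    intro s
    cases s with
    | inl a => simpa [dec1] using hAne a.1 a.2
    | inr b => simpa [dec1] using hBne b.1 b.2
  have hnilmap : ∀ t : List (↑A ⊕ ↑B), [] ∉ t.map (dec1 A B) := by
    intro t h
    obtain ⟨s, -, hs⟩ := List.mem_map.1 h
    exact hdecne s hs
  constructor
  · intro l hl
    obtain ⟨t, ht, rfl⟩ := Finset.mem_image.1 hl
    obtain ⟨htne, htnd, htch⟩ := hT.1 t ht
    refine ⟨?_, ?_, ?_⟩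
    · intro h
      rcases t with _ | ⟨s, t'⟩
      · exact htne rfl
      · rw [decodeL, List.map_cons, List.flatten_cons] at h
        exact hdecne s (List.append_eq_nil_iff.1 h).1
    · rw [decodeL, List.nodup_flatten]
      constructor
      · intro b hb
        obtain ⟨s, -, rfl⟩ := List.mem_map.1 hb
        cases s with
        | inl a => exact ((hA.1 a.1 a.2).2.1).map Sum.inl_injective
        | inr b => exact ((hB.1 b.1 b.2).2.1).map Sum.inr_injective
      · rw [List.pairwise_map]
        refine List.Pairwise.imp ?_ htnd
        intro s s' hss x hxs hxs'
        rcases mem_dec1_cases hxs with ⟨a, rfl, v, hv, rfl⟩ | ⟨b, rfl, w, hw, rfl⟩ <;>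
          rcases mem_dec1_cases hxs' with ⟨a', rfl, v', hv', heq⟩ | ⟨b', rfl, w', hw', heq⟩
        · obtain rfl : v = v' := by simpa using heq
          obtain ⟨a₀, -, hu⟩ := hA.2 v
          exact hss (by rw [Subtype.ext ((hu a.1 ⟨a.2, hv⟩).trans (hu a'.1 ⟨a'.2, hv'⟩).symm)])
        · simp at heq
        · simp at heq
        · obtain rfl : w = w' := by simpa using heq
          obtain ⟨b₀, -, hu⟩ := hB.2 w
          exact hss (by rw [Subtype.ext ((hu b.1 ⟨b.2, hw⟩).trans (hu b'.1 ⟨b'.2, hw'⟩).symm)])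
    · rw [decodeL, chain'_iff, List.isChain_flatten (hnilmap t)]
      constructor
      · intro b hb
        obtain ⟨s, -, rfl⟩ := List.mem_map.1 hb
        cases s with
        | inl a =>
          have := (hA.1 a.1 a.2).2.2
          simp only [dec1, Sum.elim_inl]
          rw [List.isChain_map]
          exact this.imp fun x y h => h
        | inr b =>
          have := (hB.1 b.1 b.2).2.2
          simp only [dec1, Sum.elim_inr]
          rw [List.isChain_map]
          exact this.imp fun x y h => h
      · rw [List.isChain_map]
        refine htch.imp ?_
        intro s s' hss x hxl y hyh
        have hxs : x ∈ dec1 A B s := List.mem_of_mem_getLast? hxl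
        have hys : y ∈ dec1 A B s' := List.mem_of_mem_head? hyh
        cases s with
        | inl a =>
          cases s' with
          | inl a' => simp at hss
          | inr b' =>
            rcases mem_dec1_cases hxs with ⟨a₀, h₀, v, hv, rfl⟩ | ⟨b₀, h₀, w, hw, rfl⟩
            · rcases mem_dec1_cases hys with ⟨a₁, h₁, v', hv', rfl⟩ | ⟨b₁, h₁, w', hw', rfl⟩
              · exact absurd h₁ (by simp)
              · exact trivial
            · exact absurd h₀ (by simp)
        | inr b =>
          cases s' with
          | inr b' => simp at hss
          | inl a' =>
            rcases mem_dec1_cases hxs with ⟨a₀, h₀, v, hv, rfl⟩ | ⟨b₀, h₀, w, hw, rfl⟩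
            · exact absurd h₀ (by simp)
            · rcases mem_dec1_cases hys with ⟨a₁, h₁, v', hv', rfl⟩ | ⟨b₁, h₁, w', hw', rfl⟩
              · exact trivial
              · exact absurd h₁ (by simp)
  · intro x
    cases x with
    | inl v =>
      obtain ⟨a, ⟨haA, hva⟩, hua⟩ := hA.2 v
      obtain ⟨t, ⟨htT, hzt⟩, hut⟩ := hT.2 (Sum.inl ⟨a, haA⟩)
      refine ⟨decodeL A B t, ⟨Finset.mem_image_of_mem _ htT, ?_⟩, ?_⟩
      · rw [decodeL, List.mem_flatten]
        exact ⟨dec1 A B (Sum.inl ⟨a, haA⟩), List.mem_map_of_mem hzt,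
          by simp [dec1, hva]⟩
      · rintro l' ⟨hl', hxl'⟩
        obtain ⟨t', ht', rfl⟩ := Finset.mem_image.1 hl'
        rw [decodeL, List.mem_flatten] at hxl'
        obtain ⟨bb, hbb, hxbb⟩ := hxl'
        obtain ⟨s, hst', rfl⟩ := List.mem_map.1 hbb
        rcases mem_dec1_cases hxbb with ⟨a₀, rfl, v', hv', heq⟩ | ⟨b₀, rfl, w', hw', heq⟩
        · obtain rfl : v = v' := by simpa using heq
          have : a₀.1 = a := (hua a₀.1 ⟨a₀.2, hv'⟩)
          have hs : (Sum.inl a₀ : ↑A ⊕ ↑B) = Sum.inl ⟨a, haA⟩ := by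
            rw [show a₀ = (⟨a, haA⟩ : ↑A) from Subtype.ext this]
          rw [hut t' ⟨ht', hs ▸ hst'⟩]
        · simp at heq
    | inr w =>
      obtain ⟨b, ⟨hbB, hwb⟩, hub⟩ := hB.2 w
      obtain ⟨t, ⟨htT, hzt⟩, hut⟩ := hT.2 (Sum.inr ⟨b, hbB⟩)
      refine ⟨decodeL A B t, ⟨Finset.mem_image_of_mem _ htT, ?_⟩, ?_⟩
      · rw [decodeL, List.mem_flatten]
        exact ⟨dec1 A B (Sum.inr ⟨b, hbB⟩), List.mem_map_of_mem hzt,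
          by simp [dec1, hwb]⟩
      · rintro l' ⟨hl', hxl'⟩
        obtain ⟨t', ht', rfl⟩ := Finset.mem_image.1 hl'
        rw [decodeL, List.mem_flatten] at hxl'
        obtain ⟨bb, hbb, hxbb⟩ := hxl'
        obtain ⟨s, hst', rfl⟩ := List.mem_map.1 hbb
        rcases mem_dec1_cases hxbb with ⟨a₀, rfl, v', hv', heq⟩ | ⟨b₀, rfl, w', hw', heq⟩
        · simp at heq
        · obtain rfl : w = w' := by simpa using heq
          have : b₀.1 = b := (hub b₀.1 ⟨b₀.2, hw'⟩)
          have hs : (Sum.inr b₀ : ↑A ⊕ ↑B) = Sum.inr ⟨b, hbB⟩ := by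
            rw [show b₀ = (⟨b, hbB⟩ : ↑B) from Subtype.ext this]
          rw [hut t' ⟨ht', hs ▸ hst'⟩]

end Main4

section Main5
variable {V W : Type*} [DecidableEq V] [DecidableEq W]
variable {G : SimpleGraph V} {H : SimpleGraph W}
variable {A : Finset (List V)} {B : Finset (List W)} {T : Finset (List (↑A ⊕ ↑B))}

/-- R1: decode ∘ encode recovers a join cover. -/
theorem image_decodeL_image_encodeL {S : Finset (List (V ⊕ W))} (hS : ∀ l ∈ S, True) :
    (S.image (encodeL (coverA S) (coverB S))).image (decodeL (coverA S) (coverB S)) = S := by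
  rw [Finset.image_image]
  have : ∀ l ∈ S, (decodeL (coverA S) (coverB S) ∘ encodeL (coverA S) (coverB S)) l = id l :=
    fun l hl => decodeL_encodeL hl
  rw [Finset.image_congr this, Finset.image_id]

/-- T-recovery: encode ∘ decode recovers a bipartite cover. -/
theorem image_encodeL_image_decodeL (hA : IsPathCover G A) (hB : IsPathCover H B)
    (hT : IsPathCover (completeBipartiteGraph ↑A ↑B) T) :
    (T.image (decodeL A B)).image (encodeL A B) = T := by
  have hAne : ∀ a ∈ A, a ≠ [] := fun a ha => (hA.1 a ha).1
  have hBne : ∀ b ∈ B, b ≠ [] := fun b hb => (hB.1 b hb).1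
  rw [Finset.image_image]
  have : ∀ t ∈ T, (encodeL A B ∘ decodeL A B) t = id t :=
    fun t ht => encodeL_decodeL hAne hBne (hT.1 t ht).2.2
  rw [Finset.image_congr this, Finset.image_id]

/-- R2: the left cover is recovered. -/
theorem coverA_image_decodeL (hA : IsPathCover G A) (hB : IsPathCover H B)
    (hT : IsPathCover (completeBipartiteGraph ↑A ↑B) T) :
    coverA (T.image (decodeL A B)) = A := by
  have hAne : ∀ a ∈ A, a ≠ [] := fun a ha => (hA.1 a ha).1
  have hBne : ∀ b ∈ B, b ≠ [] := fun b hb => (hB.1 b hb).1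
  ext a
  rw [mem_coverA]
  constructor
  · rintro ⟨hane, l, hl, b, hb, rfl⟩
    obtain ⟨t, ht, rfl⟩ := Finset.mem_image.1 hl
    rw [blocks_decodeL hAne hBne (hT.1 t ht).2.2] at hb
    obtain ⟨s, hst, rfl⟩ := List.mem_map.1 hb
    cases s with
    | inl a₀ =>
      have : unL (dec1 A B (Sum.inl a₀)) = a₀.1 := by simp [dec1]
      rw [this]; exact a₀.2
    | inr b₀ =>
      have : unL (dec1 A B (Sum.inr b₀)) = [] := by simp [dec1]
      exact absurd this hane
  · intro ha
    obtain ⟨t, ⟨htT, hzt⟩, -⟩ := hT.2 (Sum.inl ⟨a, ha⟩)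
    refine ⟨hAne a ha, decodeL A B t, Finset.mem_image_of_mem _ htT,
      dec1 A B (Sum.inl ⟨a, ha⟩), ?_, by simp [dec1]⟩
    rw [blocks_decodeL hAne hBne (hT.1 t htT).2.2]
    exact List.mem_map_of_mem hzt

theorem coverB_image_decodeL (hA : IsPathCover G A) (hB : IsPathCover H B)
    (hT : IsPathCover (completeBipartiteGraph ↑A ↑B) T) :
    coverB (T.image (decodeL A B)) = B := by
  have hAne : ∀ a ∈ A, a ≠ [] := fun a ha => (hA.1 a ha).1
  have hBne : ∀ b ∈ B, b ≠ [] := fun b hb => (hB.1 b hb).1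
  ext c
  rw [mem_coverB]
  constructor
  · rintro ⟨hane, l, hl, b, hb, rfl⟩
    obtain ⟨t, ht, rfl⟩ := Finset.mem_image.1 hl
    rw [blocks_decodeL hAne hBne (hT.1 t ht).2.2] at hb
    obtain ⟨s, hst, rfl⟩ := List.mem_map.1 hb
    cases s with
    | inl a₀ =>
      have : unR (dec1 A B (Sum.inl a₀)) = [] := by simp [dec1]
      exact absurd this hane
    | inr b₀ =>
      have : unR (dec1 A B (Sum.inr b₀)) = b₀.1 := by simp [dec1]
      rw [this]; exact b₀.2
  · intro hc
    obtain ⟨t, ⟨htT, hzt⟩, -⟩ := hT.2 (Sum.inr ⟨c, hc⟩)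
    refine ⟨hBne c hc, decodeL A B t, Finset.mem_image_of_mem _ htT,
      dec1 A B (Sum.inr ⟨c, hc⟩), ?_, by simp [dec1]⟩
    rw [blocks_decodeL hAne hBne (hT.1 t htT).2.2]
    exact List.mem_map_of_mem hzt

end Main5

theorem nat_card_sigma {ι : Type*} [Fintype ι] (f : ι → Type*) [∀ i, Finite (f i)] :
    Nat.card (Σ i, f i) = ∑ i, Nat.card (f i) := by
  letI : ∀ i, Fintype (f i) := fun i => Fintype.ofFinite _
  simp_rw [Nat.card_eq_fintype_card]
  exact Fintype.card_sigma

section Assemble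
variable {V W : Type*} [Fintype V] [Fintype W] [DecidableEq V] [DecidableEq W]

def CoverT {α : Type*} (G : SimpleGraph α) (j : ℕ) : Type _ :=
  {A : Finset (List α) // A.card = j ∧ IsPathCover G A}

variable (G : SimpleGraph V) (H : SimpleGraph W) (k : ℕ)

def Fiber (l1 l2 : ℕ) : Type _ :=
  Σ (A : CoverT G l1) (B : CoverT H l2), CoverT (completeBipartiteGraph ↑A.1 ↑B.1) k

def Phi : Type _ :=
  Σ p : Fin (Fintype.card V + 1) × Fin (Fintype.card W + 1), Fiber G H k p.1 p.2

def GinvFun : Phi G H k → CoverT (graphJoin G H) k :=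
  fun x =>
    ⟨x.2.2.2.1.image (decodeL x.2.1.1 x.2.2.1.1),
     by
      rw [Finset.card_image_of_injOn
        (decodeL_injOn x.2.1.2.2 x.2.2.1.2.2 x.2.2.2.2.2)]
      exact x.2.2.2.2.1,
     decodeL_image_isPathCover x.2.1.2.2 x.2.2.1.2.2 x.2.2.2.2.2⟩

theorem GinvFun_bijective : Function.Bijective (GinvFun G H k) := by
  constructor
  · rintro ⟨⟨l1, l2⟩, ⟨A, hA1, hA2⟩, ⟨B, hB1, hB2⟩, ⟨T, hT1, hT2⟩⟩
      ⟨⟨l1', l2'⟩, ⟨A', hA1', hA2'⟩, ⟨B', hB1', hB2'⟩, ⟨T', hT1', hT2'⟩⟩ h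
    have hS : T.image (decodeL A B) = T'.image (decodeL A' B') :=
      congrArg Subtype.val h
    have e1 : A = A' := by
      rw [← coverA_image_decodeL hA2 hB2 hT2, hS, coverA_image_decodeL hA2' hB2' hT2']
    subst e1
    have e2 : B = B' := by
      rw [← coverB_image_decodeL hA2 hB2 hT2, hS, coverB_image_decodeL hA2' hB2' hT2']
    subst e2
    have e3 : l1 = l1' := Fin.ext (by rw [← hA1, hA1'])
    subst e3
    have e4 : l2 = l2' := Fin.ext (by rw [← hB1, hB1'])
    subst e4
    have e5 : T = T' := by
      rw [← image_encodeL_image_decodeL hA2 hB2 hT2, hS,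
        image_encodeL_image_decodeL hA2 hB2 hT2']
    subst e5
    rfl
  · rintro ⟨S, hcard, hS⟩
    refine ⟨⟨(⟨(coverA S).card, Nat.lt_succ_of_le (cover_card_le G (coverA_isPathCover hS))⟩,
              ⟨(coverB S).card, Nat.lt_succ_of_le (cover_card_le H (coverB_isPathCover hS))⟩),
            ⟨coverA S, rfl, coverA_isPathCover hS⟩,
            ⟨coverB S, rfl, coverB_isPathCover hS⟩,
            ⟨S.image (encodeL (coverA S) (coverB S)),
             by rw [Finset.card_image_of_injOn encodeL_injOn]; exact hcard,
             encodeL_image_isPathCover hS⟩⟩, ?_⟩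
    apply Subtype.ext
    exact image_decodeL_image_encodeL (fun _ _ => trivial)

theorem finite_coverT {α : Type*} [Finite α] [DecidableEq α] (G : SimpleGraph α) (j : ℕ) :
    Finite (CoverT G j) := finite_cover G (fun c => c = j)

theorem card_coverT_K (l1 l2 : ℕ) (A : CoverT G l1) (B : CoverT H l2) :
    Nat.card (CoverT (completeBipartiteGraph ↑A.1 ↑B.1) k) =
      pathCoverCount (completeBipartiteGraph (Fin l1) (Fin l2)) k := by
  have eA : ↑A.1 ≃ Fin l1 := Fintype.equivFinOfCardEq (by rw [Fintype.card_coe, A.2.1])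
  have eB : ↑B.1 ≃ Fin l2 := Fintype.equivFinOfCardEq (by rw [Fintype.card_coe, B.2.1])
  refine Nat.card_congr ?_
  have hadj : ∀ x y, (completeBipartiteGraph ↑A.1 ↑B.1).Adj x y ↔
      (completeBipartiteGraph (Fin l1) (Fin l2)).Adj ((eA.sumCongr eB) x)
        ((eA.sumCongr eB) y) := by
    rintro (x | x) (y | y) <;> simp
  exact coverEquivOfEquiv (eA.sumCongr eB) hadj (fun c => c = k)

theorem card_fiber (l1 l2 : ℕ) :
    Nat.card (Fiber G H k l1 l2) =
      pathCoverCount G l1 * pathCoverCount H l2 *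
        pathCoverCount (completeBipartiteGraph (Fin l1) (Fin l2)) k := by
  haveI hfA : Finite (CoverT G l1) := finite_coverT G l1
  haveI hfB : Finite (CoverT H l2) := finite_coverT H l2
  haveI hfT : ∀ (A : CoverT G l1) (B : CoverT H l2),
      Finite (CoverT (completeBipartiteGraph ↑A.1 ↑B.1) k) :=
    fun A B => finite_coverT _ k
  letI : Fintype (CoverT G l1) := Fintype.ofFinite _
  letI : Fintype (CoverT H l2) := Fintype.ofFinite _
  rw [Fiber, nat_card_sigma]
  have h1 : ∀ A : CoverT G l1,
      Nat.card (Σ B : CoverT H l2, CoverT (completeBipartiteGraph ↑A.1 ↑B.1) k) =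
        pathCoverCount H l2 *
          pathCoverCount (completeBipartiteGraph (Fin l1) (Fin l2)) k := by
    intro A
    rw [nat_card_sigma]
    have h2 : ∀ B : CoverT H l2,
        Nat.card (CoverT (completeBipartiteGraph ↑A.1 ↑B.1) k) =
          pathCoverCount (completeBipartiteGraph (Fin l1) (Fin l2)) k :=
      fun B => card_coverT_K G H k l1 l2 A B
    rw [Finset.sum_congr rfl (fun B _ => h2 B), Finset.sum_const, Finset.card_univ,
      ← Nat.card_eq_fintype_card, smul_eq_mul]
    rfl
  rw [Finset.sum_congr rfl (fun A _ => h1 A), Finset.sum_const, Finset.card_univ,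
    ← Nat.card_eq_fintype_card, smul_eq_mul]
  rw [← mul_assoc]
  rfl

theorem pathCoverCount_join_aux :
    pathCoverCount (graphJoin G H) k =
      ∑ l₁ ∈ Finset.range (Fintype.card V + 1), ∑ l₂ ∈ Finset.range (Fintype.card W + 1),
        pathCoverCount G l₁ * pathCoverCount H l₂ *
          pathCoverCount (completeBipartiteGraph (Fin l₁) (Fin l₂)) k := by
  have h0 : pathCoverCount (graphJoin G H) k = Nat.card (Phi G H k) :=
    (Nat.card_congr (Equiv.ofBijective _ (GinvFun_bijective G H k))).symm
  haveI hfib : ∀ p : Fin (Fintype.card V + 1) × Fin (Fintype.card W + 1),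
      Finite (Fiber G H k p.1 p.2) := by
    intro p
    haveI : Finite (CoverT G p.1) := finite_coverT G p.1
    haveI : Finite (CoverT H p.2) := finite_coverT H p.2
    haveI : ∀ (A : CoverT G (p.1:ℕ)) (B : CoverT H (p.2:ℕ)),
        Finite (CoverT (completeBipartiteGraph ↑A.1 ↑B.1) k) :=
      fun A B => finite_coverT _ k
    rw [Fiber]
    infer_instance
  rw [h0, Phi, nat_card_sigma]
  rw [Finset.sum_congr rfl (fun p _ => card_fiber G H k p.1 p.2)]
  rw [Fintype.sum_prod_type]
  dsimp only
  have hinner : ∀ x : Fin (Fintype.card V + 1),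
      (∑ y : Fin (Fintype.card W + 1),
        pathCoverCount G (x : ℕ) * pathCoverCount H (y : ℕ) *
          pathCoverCount (completeBipartiteGraph (Fin (x : ℕ)) (Fin (y : ℕ))) k) =
      ∑ l₂ ∈ Finset.range (Fintype.card W + 1),
        pathCoverCount G (x : ℕ) * pathCoverCount H l₂ *
          pathCoverCount (completeBipartiteGraph (Fin (x : ℕ)) (Fin l₂)) k :=
    fun x => Fin.sum_univ_eq_sum_range
      (fun l₂ => pathCoverCount G (x : ℕ) * pathCoverCount H l₂ *
        pathCoverCount (completeBipartiteGraph (Fin (x : ℕ)) (Fin l₂)) k)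
      (Fintype.card W + 1)
  rw [Finset.sum_congr rfl (fun x _ => hinner x)]
  exact Fin.sum_univ_eq_sum_range (fun l₁ => ∑ l₂ ∈ Finset.range (Fintype.card W + 1),
    pathCoverCount G l₁ * pathCoverCount H l₂ *
      pathCoverCount (completeBipartiteGraph (Fin l₁) (Fin l₂)) k) (Fintype.card V + 1)

end Assemble

end PJoin

/-- Path covers of the join decompose through complete bipartite graphs:
`p_k(G ∇ H) = ∑_{l₁,l₂} p_{l₁}(G) p_{l₂}(H) p_k(K_{l₁,l₂})`, i.e.
`π_{G∇H}(t) = ∑_{l₁,l₂} p_{l₁}(G) p_{l₂}(H) π_{K_{l₁,l₂}}(t)` coefficientwise. -/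
theorem pathCoverCount_join {V W : Type*} [Fintype V] [Fintype W]
    [DecidableEq V] [DecidableEq W] (G : SimpleGraph V) (H : SimpleGraph W) (k : ℕ)
    (hk : 1 ≤ k) :
    pathCoverCount (graphJoin G H) k =
      ∑ l₁ ∈ Finset.range (Fintype.card V + 1), ∑ l₂ ∈ Finset.range (Fintype.card W + 1),
        pathCoverCount G l₁ * pathCoverCount H l₂ *
          pathCoverCount (completeBipartiteGraph (Fin l₁) (Fin l₂)) k := by
  exact PJoin.pathCoverCount_join_aux G H k
end

section
/- For every n ≥ 0, the polynomial identity e^{−tD²}[tⁿ] = ∑_{k=1}^n (−1)^{n−k} (n!/k!) C(n−1,k−1) t^k holds, and this polynomial equals (−1)ⁿ n! L_n^{(−1)}(t), where L_n^{(−1)} is the associated Laguerre polynomial with parameter α = −1; moreover the family {e^{−tD²}[tⁿ]}_{n≥1} is orthogonal with respect to the measure t^{−1}e^{−t}dt on [0,∞), i.e. ∫₀^∞ t^{−1} e^{−t} e^{−tD²}[tⁿ] · e^{−tD²}[t^m] dt = 0 for n ≠ m, n,m ≥ 1. -/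
open Polynomial

/-- The operator `e^{-tD²} = ∑_j (-1)^j (tD²)^j / j!`, a finite sum on each
polynomial. -/
noncomputable def expTD2neg (p : Polynomial ℝ) : Polynomial ℝ :=
  ∑ j ∈ Finset.range (p.natDegree + 1), ((-1 : ℝ) ^ j * ((j.factorial : ℝ))⁻¹) • tD2^[j] p

/-- The associated Laguerre polynomial `L_n^{(-1)}(t) = ∑_k (-1)^k C(n-1, n-k) t^k / k!`. -/
noncomputable def laguerreNegOne (n : ℕ) : Polynomial ℝ :=
  ∑ k ∈ Finset.range (n + 1),
    ((-1 : ℝ) ^ k * ((n - 1).choose (n - k) : ℝ) / (k.factorial : ℝ)) • X ^ k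

open MeasureTheory


lemma tD2_smul_X_pow (a : ℝ) (k : ℕ) :
    tD2 (a • (X : Polynomial ℝ) ^ k) = (a * ((k * (k - 1) : ℕ) : ℝ)) • X ^ (k - 1) := by
  rcases k with _|_|k
  · rw [tD2]; simp
  · rw [tD2, pow_one, derivative_smul, derivative_X, derivative_smul]; simp
  · rw [tD2, derivative_smul, derivative_X_pow, Nat.add_sub_cancel,
      derivative_smul, derivative_C_mul, derivative_X_pow, Nat.add_sub_cancel]
    rw [smul_eq_C_mul, smul_eq_C_mul, Nat.cast_mul, C_mul, C_mul]
    ring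

lemma iter_tD2_X_pow (n j : ℕ) :
    tD2^[j] ((X : Polynomial ℝ) ^ n)
      = ((n.descFactorial j * (n - 1).descFactorial j : ℕ) : ℝ) • X ^ (n - j) := by
  induction j with
  | zero => simp
  | succ j ih =>
      rw [Function.iterate_succ_apply', ih, tD2_smul_X_pow]
      rw [Nat.descFactorial_succ, Nat.descFactorial_succ]
      congr 1
      · push_cast
        rw [show n - 1 - j = n - j - 1 by omega]
        ring

lemma expTD2neg_X_pow (n : ℕ) (hn : 1 ≤ n) :
    expTD2neg ((X : Polynomial ℝ) ^ n) =
      ∑ k ∈ Finset.Icc 1 n,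
        ((-1 : ℝ) ^ (n - k) * ((n.factorial : ℝ) / (k.factorial : ℝ)) *
          ((n - 1).choose (k - 1) : ℝ)) • X ^ k := by
  rw [expTD2neg]
  simp only [natDegree_X_pow, iter_tD2_X_pow, smul_smul]
  set f : ℕ → Polynomial ℝ := fun j =>
    ((-1 : ℝ) ^ j * ((j.factorial : ℝ))⁻¹ *
      ((n.descFactorial j * (n - 1).descFactorial j : ℕ) : ℝ)) • X ^ (n - j) with hf
  have hrefl : ∑ j ∈ Finset.range (n + 1), f j
      = ∑ k ∈ Finset.range (n + 1), f (n - k) := by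
    have := Finset.sum_range_reflect f (n + 1)
    simpa using this.symm
  rw [hrefl]
  rw [← Finset.sum_subset
    (show Finset.Icc 1 n ⊆ Finset.range (n+1) by
      intro x hx; simp only [Finset.mem_Icc] at hx; simp only [Finset.mem_range]; omega) ?side2]
  case side2 =>
    intro k hk hk'
    have hk0 : k = 0 := by
      simp only [Finset.mem_range] at hk
      simp only [Finset.mem_Icc] at hk'
      omega
    subst hk0
    simp only [hf, Nat.sub_zero]
    have : (n - 1).descFactorial n = 0 := Nat.descFactorial_eq_zero_iff_lt.mpr (by omega)
    simp [this]
  refine Finset.sum_congr rfl fun k hk => ?_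
  simp only [Finset.mem_Icc] at hk
  obtain ⟨hk1, hkn⟩ := hk
  simp only [hf]
  rw [show n - (n - k) = k by omega]
  congr 1
  have h1 : n.descFactorial (n - k) = (n - k).factorial * n.choose k := by
    rw [Nat.descFactorial_eq_factorial_mul_choose, Nat.choose_symm hkn]
  have h2 : (n - 1).descFactorial (n - k) = (n - k).factorial * (n - 1).choose (k - 1) := by
    rw [Nat.descFactorial_eq_factorial_mul_choose, show n - k = (n - 1) - (k - 1) by omega,
      Nat.choose_symm (by omega)]
  have h3 : ((n.choose k : ℝ)) * (k.factorial : ℝ) * ((n - k).factorial : ℝ)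
      = (n.factorial : ℝ) := by
    exact_mod_cast congrArg (Nat.cast : ℕ → ℝ) (Nat.choose_mul_factorial_mul_factorial hkn)
  rw [h1, h2]
  push_cast
  have hnk : ((n - k).factorial : ℝ) ≠ 0 := Nat.cast_ne_zero.mpr (Nat.factorial_ne_zero _)
  have hkf : ((k).factorial : ℝ) ≠ 0 := Nat.cast_ne_zero.mpr (Nat.factorial_ne_zero _)
  field_simp
  rw [← h3]
  ring

lemma laguerre_eq (n : ℕ) (hn : 1 ≤ n) :
    ((-1 : ℝ) ^ n * (n.factorial : ℝ)) • laguerreNegOne n =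
      ∑ k ∈ Finset.Icc 1 n,
        ((-1 : ℝ) ^ (n - k) * ((n.factorial : ℝ) / (k.factorial : ℝ)) *
          ((n - 1).choose (k - 1) : ℝ)) • X ^ k := by
  rw [laguerreNegOne, Finset.smul_sum]
  rw [← Finset.sum_subset
    (show Finset.Icc 1 n ⊆ Finset.range (n+1) by
      intro x hx; simp only [Finset.mem_Icc] at hx; simp only [Finset.mem_range]; omega) ?side2]
  case side2 =>
    intro k hk hk'
    have hk0 : k = 0 := by
      simp only [Finset.mem_range] at hk; simp only [Finset.mem_Icc] at hk'; omega
    subst hk0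
    have : (n - 1).choose (n - 0) = 0 := Nat.choose_eq_zero_of_lt (by omega)
    simp only [this]
    simp
  refine Finset.sum_congr rfl fun k hk => ?_
  simp only [Finset.mem_Icc] at hk
  obtain ⟨hk1, hkn⟩ := hk
  rw [smul_smul]
  congr 1
  have hch : (n - 1).choose (n - k) = (n - 1).choose (k - 1) := by
    rw [show n - k = (n - 1) - (k - 1) by omega]; exact Nat.choose_symm (by omega)
  have hsgn : ((-1:ℝ))^n = (-1)^(n-k) * (-1)^k := by rw [← pow_add]; congr 1; omega
  rw [hch, hsgn]
  have h1 : ((-1:ℝ))^k * (-1)^k = 1 := by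
    rw [← pow_add, ← two_mul, pow_mul]; norm_num
  linear_combination ((n.factorial:ℝ) * (((n-1).choose (k-1) : ℕ):ℝ) / (k.factorial:ℝ) * (-1:ℝ)^(n-k)) * h1

lemma FD : ∀ (N : ℕ) (P : Polynomial ℝ), P.degree < N →
    ∑ j ∈ Finset.range (N + 1), (-1 : ℝ) ^ j * (N.choose j : ℝ) * P.eval (j : ℝ) = 0 := by
  intro N
  induction N with
  | zero =>
      intro P hP
      have hP0 : P = 0 :=
        Polynomial.degree_eq_bot.mp (Nat.WithBot.lt_zero_iff.mp (by exact_mod_cast hP))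
      subst hP0
      simp
  | succ N ih =>
      intro P hP
      set Q : Polynomial ℝ := P - P.comp (X + 1) with hQ
      have hn1 : ((X : Polynomial ℝ) + 1).natDegree = 1 := by
        rw [← C_1]; exact natDegree_X_add_C 1
      have hQdeg : Q.degree < N := by
        by_cases hc : P.natDegree = 0
        · obtain ⟨a, rfl⟩ := Polynomial.natDegree_eq_zero.mp hc
          have h0 : Q = 0 := by simp [hQ]
          rw [h0, Polynomial.degree_zero]
          exact WithBot.bot_lt_coe N
        · have hP0 : P ≠ 0 := fun h => hc (by simp [h])
          have hlc1 : ((X : Polynomial ℝ) + 1).leadingCoeff = 1 := by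
            rw [← C_1]; exact monic_X_add_C 1
          have hlcP : (P.comp (X + 1)).leadingCoeff = P.leadingCoeff := by
            rw [Polynomial.leadingCoeff_comp (by rw [hn1]; norm_num), hlc1, one_pow, mul_one]
          have hcomp0 : P.comp (X + 1) ≠ 0 := by
            intro h
            rw [h, Polynomial.leadingCoeff_zero] at hlcP
            exact hP0 (Polynomial.leadingCoeff_eq_zero.mp hlcP.symm)
          have hdeg_comp : (P.comp (X + 1)).degree = P.degree := by
            rw [Polynomial.degree_eq_natDegree hcomp0, Polynomial.degree_eq_natDegree hP0,
              Polynomial.natDegree_comp, hn1, mul_one]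
          have h1 : Q.degree < P.degree :=
            Polynomial.degree_sub_lt hdeg_comp.symm hP0 hlcP.symm
          have h2 : P.degree ≤ N := by
            have h3 := hP
            rw [Nat.cast_succ] at h3
            exact Order.lt_succ_iff.mp h3
          exact lt_of_lt_of_le h1 h2
      have evQ : ∀ x : ℝ, Q.eval x = P.eval x - P.eval (x + 1) := by
        intro x
        simp only [hQ, eval_sub, eval_comp, eval_add, eval_X, eval_one]
      have hfold : (∑ j ∈ Finset.range (N + 1),
            (-1 : ℝ) ^ (j+1) * (N.choose (j+1) : ℝ) * P.eval ((j+1 : ℕ) : ℝ))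
            + (-1 : ℝ) ^ (0:ℕ) * (N.choose 0 : ℝ) * P.eval ((0 : ℕ) : ℝ)
          = ∑ j ∈ Finset.range (N + 1), (-1 : ℝ) ^ j * (N.choose j : ℝ) * P.eval ((j : ℕ) : ℝ) := by
        rw [← Finset.sum_range_succ' (fun j => (-1 : ℝ) ^ j * (N.choose j : ℝ) * P.eval (j : ℝ)) (N+1),
          Finset.sum_range_succ]
        simp [Nat.choose_succ_self]
      have key : ∑ j ∈ Finset.range (N + 1 + 1), (-1 : ℝ) ^ j * ((N+1).choose j : ℝ) * P.eval (j : ℝ)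
          = ∑ j ∈ Finset.range (N + 1), (-1 : ℝ) ^ j * (N.choose j : ℝ) * Q.eval (j : ℝ) := by
        calc ∑ j ∈ Finset.range (N + 1 + 1), (-1 : ℝ) ^ j * ((N+1).choose j : ℝ) * P.eval (j : ℝ)
            = (∑ j ∈ Finset.range (N + 1),
                ((-1 : ℝ) ^ (j+1) * (N.choose j : ℝ) * P.eval ((j+1 : ℕ) : ℝ)
                 + (-1 : ℝ) ^ (j+1) * (N.choose (j+1) : ℝ) * P.eval ((j+1 : ℕ) : ℝ)))
              + (-1 : ℝ) ^ (0:ℕ) * (N.choose 0 : ℝ) * P.eval ((0 : ℕ) : ℝ) := by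
              rw [Finset.sum_range_succ' (fun j => (-1 : ℝ) ^ j * ((N+1).choose j : ℝ) * P.eval (j : ℝ)) (N+1)]
              congr 1
              · refine Finset.sum_congr rfl fun j _ => ?_
                rw [Nat.choose_succ_succ]
                push_cast
                ring
              · simp
          _ = (∑ j ∈ Finset.range (N + 1),
                (-1 : ℝ) ^ (j+1) * (N.choose j : ℝ) * P.eval ((j+1 : ℕ) : ℝ))
              + ((∑ j ∈ Finset.range (N + 1),
                (-1 : ℝ) ^ (j+1) * (N.choose (j+1) : ℝ) * P.eval ((j+1 : ℕ) : ℝ))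
               + (-1 : ℝ) ^ (0:ℕ) * (N.choose 0 : ℝ) * P.eval ((0 : ℕ) : ℝ)) := by
              rw [Finset.sum_add_distrib]; ring
          _ = (∑ j ∈ Finset.range (N + 1),
                (-1 : ℝ) ^ (j+1) * (N.choose j : ℝ) * P.eval ((j+1 : ℕ) : ℝ))
              + (∑ j ∈ Finset.range (N + 1), (-1 : ℝ) ^ j * (N.choose j : ℝ) * P.eval ((j : ℕ) : ℝ)) := by
              rw [hfold]
          _ = ∑ j ∈ Finset.range (N + 1), (-1 : ℝ) ^ j * (N.choose j : ℝ) * Q.eval (j : ℝ) := by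
              rw [← Finset.sum_add_distrib]
              refine Finset.sum_congr rfl fun j _ => ?_
              rw [evQ]
              push_cast
              ring
      rw [key, ih Q hQdeg]

lemma prodfact (d j : ℕ) : (∏ i ∈ Finset.range d, (j + 2 + i)) * (j + 1).factorial
    = (d + 1 + j).factorial := by
  induction d with
  | zero => simp [Nat.add_comm 1 j]
  | succ d ih =>
      rw [Finset.prod_range_succ, mul_comm _ (j + 2 + d), mul_assoc, ih,
        show d + 1 + 1 + j = (d + 1 + j) + 1 by omega, Nat.factorial_succ,
        show d + 1 + j + 1 = j + 2 + d by omega]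

lemma inner_sum_zero (m k : ℕ) (hk1 : 1 ≤ k) (hkm : k < m) :
    ∑ l ∈ Finset.Icc 1 m, (-1:ℝ)^(m-l) * ((m.factorial:ℝ)/(l.factorial:ℝ))
      * (((m-1).choose (l-1) : ℕ) : ℝ) * (((k+l-1).factorial : ℕ) : ℝ) = 0 := by
  set P : Polynomial ℝ := ∏ i ∈ Finset.range (k-1), (X + C ((i:ℝ) + 2)) with hP
  have hPne : ∀ i ∈ Finset.range (k-1), (X + C ((i:ℝ) + 2)) ≠ 0 := by
    intro i _
    exact Polynomial.X_add_C_ne_zero _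
  have hPdeg : P.natDegree = k - 1 := by
    rw [hP, Polynomial.natDegree_prod _ _ hPne]
    have : ∀ i ∈ Finset.range (k-1), (X + C ((i:ℝ) + 2)).natDegree = 1 :=
      fun i _ => Polynomial.natDegree_X_add_C _
    rw [Finset.sum_congr rfl this]
    simp
  have hPev : ∀ j : ℕ, P.eval (j : ℝ)
      = ((k + j).factorial : ℝ) / (((j+1).factorial : ℕ) : ℝ) := by
    intro j
    have h1 : P.eval (j : ℝ) = ((∏ i ∈ Finset.range (k-1), (j + 2 + i) : ℕ) : ℝ) := by
      rw [hP, Polynomial.eval_prod, Nat.cast_prod]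
      refine Finset.prod_congr rfl fun i _ => ?_
      push_cast
      simp
      ring
    have h2 := prodfact (k-1) j
    rw [show k - 1 + 1 + j = k + j by omega] at h2
    rw [h1]
    rw [eq_div_iff (by exact_mod_cast Nat.factorial_ne_zero (j+1))]
    exact_mod_cast h2
  have hdeg : P.degree < ((m - 1 : ℕ) : WithBot ℕ) := by
    calc P.degree ≤ P.natDegree := Polynomial.degree_le_natDegree
    _ < ((m-1 : ℕ) : WithBot ℕ) := by
        rw [hPdeg]
        exact_mod_cast (by omega : k - 1 < m - 1)
  have hFD := FD (m-1) P hdeg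
  rw [show Finset.Icc 1 m = Finset.Ico 1 (m+1) by rw [Finset.Ico_add_one_right_eq_Icc]]
  rw [Finset.sum_Ico_eq_sum_range]
  rw [show m + 1 - 1 = (m - 1) + 1 by omega]
  rw [show (0:ℝ) = (-1:ℝ)^(m-1) * (m.factorial : ℝ) * (∑ j ∈ Finset.range ((m-1) + 1),
      (-1 : ℝ) ^ j * (((m-1).choose j : ℕ) : ℝ) * P.eval (j : ℝ)) by rw [hFD]; ring]
  rw [Finset.mul_sum]
  refine Finset.sum_congr rfl fun j hj => ?_
  simp only [Finset.mem_range] at hj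
  have hjm : j ≤ m - 1 := by omega
  rw [show 1 + j - 1 = j by omega, show m - (1 + j) = m - 1 - j by omega,
    show k + (1 + j) - 1 = k + j by omega, show (1+j).factorial = (j+1).factorial by rw [Nat.add_comm],
    hPev j]
  have h2 : (-1:ℝ)^j * (-1)^j = 1 := by
    rw [← pow_add, ← two_mul, pow_mul]; norm_num
  have hsgn : (-1:ℝ)^(m-1) = (-1)^(m-1-j) * (-1)^j := by
    rw [← pow_add]; congr 1; omega
  rw [hsgn]
  linear_combination (-1 * (-1:ℝ)^(m-1-j) * (m.factorial:ℝ) * (((m-1).choose j : ℕ):ℝ)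
      * (((k+j).factorial : ℕ):ℝ)  / (((j+1).factorial : ℕ):ℝ)) * h2

lemma integ_pow_exp (d : ℕ) :
    IntegrableOn (fun t : ℝ => t ^ d * Real.exp (-t)) (Set.Ioi 0) := by
  have h := Real.GammaIntegral_convergent (show (0:ℝ) < d + 1 by positivity)
  have hfun : (fun x : ℝ => Real.exp (-x) * x ^ ((d:ℝ) + 1 - 1))
      = fun t : ℝ => t ^ d * Real.exp (-t) := by
    funext x
    rw [add_sub_cancel_right, Real.rpow_natCast, mul_comm]
  rwa [hfun] at h

lemma integral_pow_exp (d : ℕ) :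
    ∫ t in Set.Ioi (0:ℝ), t ^ d * Real.exp (-t) = (d.factorial : ℝ) := by
  have h := Real.Gamma_eq_integral (show (0:ℝ) < d + 1 by positivity)
  rw [Real.Gamma_nat_eq_factorial] at h
  rw [h]
  refine setIntegral_congr_fun measurableSet_Ioi fun t ht => ?_
  rw [add_sub_cancel_right, Real.rpow_natCast, mul_comm]

noncomputable def A (n k : ℕ) : ℝ :=
  (-1 : ℝ) ^ (n - k) * ((n.factorial : ℝ) / (k.factorial : ℝ)) * (((n - 1).choose (k - 1) : ℕ) : ℝ)

lemma ortho (n m : ℕ) (hn : 1 ≤ n) (hm : 1 ≤ m) (hnm : m ≠ n) :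
    (∫ t in Set.Ioi (0 : ℝ),
        t⁻¹ * Real.exp (-t) *
          ((∑ k ∈ Finset.Icc 1 n, A n k • (X:Polynomial ℝ) ^ k).eval t *
            (∑ l ∈ Finset.Icc 1 m, A m l • (X:Polynomial ℝ) ^ l).eval t)) = 0 := by
  have hev : ∀ (N : ℕ) (t : ℝ),
      (∑ k ∈ Finset.Icc 1 N, A N k • (X:Polynomial ℝ) ^ k).eval t
        = ∑ k ∈ Finset.Icc 1 N, A N k * t ^ k := by
    intro N t
    rw [Polynomial.eval_finset_sum]
    refine Finset.sum_congr rfl fun k _ => ?_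
    simp
  have hcongr : ∀ t ∈ Set.Ioi (0:ℝ),
      t⁻¹ * Real.exp (-t) *
          ((∑ k ∈ Finset.Icc 1 n, A n k • (X:Polynomial ℝ) ^ k).eval t *
            (∑ l ∈ Finset.Icc 1 m, A m l • (X:Polynomial ℝ) ^ l).eval t)
        = ∑ k ∈ Finset.Icc 1 n, ∑ l ∈ Finset.Icc 1 m,
            (A n k * A m l) * (t ^ (k + l - 1) * Real.exp (-t)) := by
    intro t ht
    have ht0 : t ≠ 0 := ne_of_gt (Set.mem_Ioi.mp ht)
    rw [hev, hev, Finset.sum_mul_sum]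
    rw [Finset.mul_sum]
    refine Finset.sum_congr rfl fun k hk => ?_
    rw [Finset.mul_sum]
    refine Finset.sum_congr rfl fun l hl => ?_
    simp only [Finset.mem_Icc] at hk hl
    have h1 : t ^ k * t ^ l = t * t ^ (k + l - 1) := by
      rw [← pow_add, show t * t ^ (k + l - 1) = t ^ ((k + l - 1) + 1) by rw [pow_succ]; ring]
      congr 1
      omega
    rw [show t⁻¹ * Real.exp (-t) * (A n k * t ^ k * (A m l * t ^ l))
        = A n k * A m l * (t⁻¹ * (t ^ k * t ^ l) * Real.exp (-t)) by ring, h1,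
      inv_mul_cancel_left₀ ht0]
  rw [setIntegral_congr_fun measurableSet_Ioi hcongr]
  have hinteg : ∀ (k l : ℕ), IntegrableOn
      (fun t : ℝ => (A n k * A m l) * (t ^ (k + l - 1) * Real.exp (-t))) (Set.Ioi 0) :=
    fun k l => (integ_pow_exp (k + l - 1)).const_mul _
  rw [integral_finset_sum _ (fun k _ => integrable_finset_sum _ (fun l _ => hinteg k l))]
  have hin : ∀ k ∈ Finset.Icc 1 n, (∫ t in Set.Ioi (0:ℝ), ∑ l ∈ Finset.Icc 1 m,
        (A n k * A m l) * (t ^ (k + l - 1) * Real.exp (-t)))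
      = ∑ l ∈ Finset.Icc 1 m, (A n k * A m l) * (((k + l - 1).factorial : ℕ) : ℝ) := by
    intro k _
    rw [integral_finset_sum _ (fun l _ => hinteg k l)]
    refine Finset.sum_congr rfl fun l _ => ?_
    rw [integral_const_mul, integral_pow_exp]
  rw [Finset.sum_congr rfl hin]
  -- now pure combinatorics
  rcases lt_or_gt_of_ne hnm with hlt | hgt
  · -- m < n : swap
    rw [Finset.sum_comm]
    refine Finset.sum_eq_zero fun l hl => ?_
    simp only [Finset.mem_Icc] at hl
    have h0 := inner_sum_zero n l hl.1 (by omega)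
    have : ∑ k ∈ Finset.Icc 1 n, A n k * (((l + k - 1).factorial : ℕ) : ℝ) = 0 := by
      rw [← h0]
      exact Finset.sum_congr rfl fun k _ => by rw [A]
    calc ∑ k ∈ Finset.Icc 1 n, A n k * A m l * (((k + l - 1).factorial : ℕ) : ℝ)
        = A m l * ∑ k ∈ Finset.Icc 1 n, A n k * (((l + k - 1).factorial : ℕ) : ℝ) := by
          rw [Finset.mul_sum]
          exact Finset.sum_congr rfl fun k _ => by rw [show l + k - 1 = k + l - 1 by omega]; ring
      _ = 0 := by rw [this, mul_zero]
  · -- n < m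
    refine Finset.sum_eq_zero fun k hk => ?_
    simp only [Finset.mem_Icc] at hk
    have h0 := inner_sum_zero m k hk.1 (by omega)
    have : ∑ l ∈ Finset.Icc 1 m, A m l * (((k + l - 1).factorial : ℕ) : ℝ) = 0 := by
      rw [← h0]
      exact Finset.sum_congr rfl fun l _ => by rw [A]
    calc ∑ l ∈ Finset.Icc 1 m, A n k * A m l * (((k + l - 1).factorial : ℕ) : ℝ)
        = A n k * ∑ l ∈ Finset.Icc 1 m, A m l * (((k + l - 1).factorial : ℕ) : ℝ) := by
          rw [Finset.mul_sum]
          exact Finset.sum_congr rfl fun l _ => by ring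
      _ = 0 := by rw [this, mul_zero]

theorem expTD2neg_monomial_laguerre (n : ℕ) (hn : 1 ≤ n) :
    (expTD2neg ((X : Polynomial ℝ) ^ n) =
      ∑ k ∈ Finset.Icc 1 n,
        ((-1 : ℝ) ^ (n - k) * ((n.factorial : ℝ) / (k.factorial : ℝ)) *
          ((n - 1).choose (k - 1) : ℝ)) • X ^ k) ∧
    (expTD2neg ((X : Polynomial ℝ) ^ n) =
      ((-1 : ℝ) ^ n * (n.factorial : ℝ)) • laguerreNegOne n) ∧
    (∀ m : ℕ, 1 ≤ m → m ≠ n →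
      (∫ t in Set.Ioi (0 : ℝ),
        t⁻¹ * Real.exp (-t) *
          ((expTD2neg ((X : Polynomial ℝ) ^ n)).eval t *
            (expTD2neg ((X : Polynomial ℝ) ^ m)).eval t)) = 0) := by
  refine ⟨expTD2neg_X_pow n hn, ?_, ?_⟩
  · rw [expTD2neg_X_pow n hn]
    exact (laguerre_eq n hn).symm
  · intro m hm hne
    simp only [expTD2neg_X_pow n hn, expTD2neg_X_pow m hm]
    simpa only [A] using ortho n m hn hm hne
end
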